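/- Let μ be a probability measure on a finite set V of size n, k ≥ 1 an integer, s = n^{1/k}/δ with δ = (k+1)^{-(k+1)/k}, and define the probability measure μ̃(v) = 1/(sn) + ((s-1)/s)·μ(v). Suppose M ⊆ V satisfies sn·μ̃(M) ≥ (sn)^{1 - 1/(k+1)}. Then μ(M) ≥ (k+1)^{-1/k}·(1 - 1/(k+1))·n^{-1/k}. -/

import Mathlib

/-- μ a probability measure on a finite set of size n, k ≥ 1,
s = n^{1/k}/δ with δ = (k+1)^{-(k+1)/k}, μ̃(v) = 1/(sn) + ((s-1)/s)μ(v). If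
sn·μ̃(M) ≥ (sn)^{1-1/(k+1)} then μ(M) ≥ (k+1)^{-1/k}(1 - 1/(k+1))·n^{-1/k}. -/
theorem stmt6 {α : Type*} [Fintype α] (n k : ℕ) (hk : 1 ≤ k) (hn : 1 ≤ n)
    (hcard : Fintype.card α = n)
    (μ : α → ℝ) (hnn : ∀ v, 0 ≤ μ v) (hsum : ∑ v, μ v = 1)
    (δ s : ℝ)
    (hδ : δ = ((k : ℝ) + 1) ^ (-(((k : ℝ) + 1) / k)))
    (hs : s = (n : ℝ) ^ ((1 : ℝ) / k) / δ)
    (M : Finset α)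
    (hM : (s * n) ^ (1 - 1 / ((k : ℝ) + 1))
        ≤ s * n * ∑ v ∈ M, (1 / (s * n) + (s - 1) / s * μ v)) :
    ((k : ℝ) + 1) ^ (-(1 : ℝ) / k) * (1 - 1 / ((k : ℝ) + 1)) * (n : ℝ) ^ (-(1 : ℝ) / k)
      ≤ ∑ v ∈ M, μ v := by
  have hk0 : (0:ℝ) < k := by exact_mod_cast hk
  have hn0 : (0:ℝ) < n := by exact_mod_cast hn
  have hc : (0:ℝ) < (k:ℝ) + 1 := by positivity
  have hδpos : 0 < δ := by rw [hδ]; positivity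
  have hspos : 0 < s := by rw [hs]; positivity
  have hsn : 0 < s * n := by positivity
  -- s * n = ((k+1) * n) ^ ((k+1)/k)
  have hsn_eq : s * (n:ℝ) = (((k:ℝ) + 1) * n) ^ (((k:ℝ) + 1) / k) := by
    have hn_eq : (n:ℝ) ^ (((k:ℝ)+1)/k) = (n:ℝ) ^ ((1:ℝ)/k) * n := by
      have h1 : ((k:ℝ)+1)/k = 1/k + 1 := by field_simp; ring
      rw [h1, Real.rpow_add hn0, Real.rpow_one]
    rw [hs, hδ, Real.rpow_neg hc.le, div_eq_mul_inv, inv_inv,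
      Real.mul_rpow hc.le hn0.le, hn_eq]
    ring
  -- (s*n)^(1-1/(k+1)) = (k+1)*n
  have hpow : (s * (n:ℝ)) ^ (1 - 1 / ((k:ℝ)+1)) = ((k:ℝ)+1) * n := by
    rw [hsn_eq, ← Real.rpow_mul (by positivity)]
    have h1 : ((k:ℝ)+1)/k * (1 - 1/((k:ℝ)+1)) = 1 := by field_simp; ring
    rw [h1, Real.rpow_one]
  -- expand the sum
  set μM := ∑ v ∈ M, μ v with hμM
  have hμM0 : 0 ≤ μM := Finset.sum_nonneg fun v _ => hnn v
  have hcardM : (M.card : ℝ) ≤ n := by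
    exact_mod_cast hcard ▸ Finset.card_le_univ M
  have hexp : s * n * ∑ v ∈ M, (1 / (s * n) + (s - 1) / s * μ v)
      = M.card + (s - 1) * n * μM := by
    rw [Finset.sum_add_distrib, Finset.sum_const, ← Finset.mul_sum]
    field_simp
    rw [nsmul_eq_mul, ← hμM]
    have h2 : (n:ℝ) * s * (1 / (s * n)) = 1 := by
      rw [mul_comm (n:ℝ) s]; exact mul_one_div_cancel hsn.ne'
    linear_combination (M.card:ℝ) * h2
  rw [hexp, hpow] at hM
  -- kn ≤ s n μM
  have hkey : (k:ℝ) * n ≤ s * n * μM := by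
    nlinarith [mul_nonneg hn0.le hμM0]
  -- μM ≥ k/s
  have hge : (k:ℝ) / s ≤ μM := by
    rw [div_le_iff₀ hspos]
    nlinarith
  refine le_trans (le_of_eq ?_) hge
  -- target = k/s
  have e1 : ((k:ℝ)+1) ^ (-(1:ℝ)/k) = (((k:ℝ)+1) ^ ((1:ℝ)/k))⁻¹ := by
    rw [neg_div, Real.rpow_neg hc.le]
  have e2 : (n:ℝ) ^ (-(1:ℝ)/k) = ((n:ℝ) ^ ((1:ℝ)/k))⁻¹ := by
    rw [neg_div, Real.rpow_neg hn0.le]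
  have e3 : ((k:ℝ)+1) ^ (-(((k:ℝ)+1)/k))
      = ((((k:ℝ)+1) ^ ((1:ℝ)/k)) * ((k:ℝ)+1))⁻¹ := by
    have h1 : -(((k:ℝ)+1)/k) = -((1:ℝ)/k) + (-1) := by field_simp; ring
    rw [h1, Real.rpow_add hc, Real.rpow_neg_one, mul_inv]
    congr 1
    rw [Real.rpow_neg hc.le]
  rw [hs, hδ, e1, e2, e3]
  have ha : 0 < ((k:ℝ)+1) ^ ((1:ℝ)/k) := Real.rpow_pos_of_pos hc _
  have hb : 0 < (n:ℝ) ^ ((1:ℝ)/k) := Real.rpow_pos_of_pos hn0 _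
  field_simp
  ring
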